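/- Let g ≥ h ≥ 2 be integers and let A ⊆ ℕ be a C_h[g]-set in ℤ. There is a constant C = C(g,h) > 0 such that for every positive integer N, writing A_ν = |A ∩ ((ν-1)N, νN]| for 1 ≤ ν ≤ N, one has Σ_{ν=1}^{N} A_ν^h ≤ C · N^{h-1}. -/

import Mathlib

/-- `A ⊆ Γ` is a `C_h[g]`-set. -/
def IsChSet {Γ : Type*} [AddCommGroup Γ] (h g : ℕ) (A : Set Γ) : Prop :=
  ∀ X : Finset Γ, X.card = h → ∀ K : Finset Γ, K.card = g →
    ∃ k ∈ K, ¬ (∀ x ∈ X, x + k ∈ A)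

lemma chset_bound {Γ : Type*} [AddCommGroup Γ] {h g : ℕ} {A : Set Γ}
    (hA : IsChSet h g A) {X : Finset Γ} (hX : X.card = h) {K : Finset Γ}
    (hK : ∀ k ∈ K, ∀ x ∈ X, x + k ∈ A) : K.card ≤ g - 1 := by
  by_contra hc
  push_neg at hc
  obtain ⟨K', hK', hcard⟩ := Finset.exists_subset_card_eq (show g ≤ K.card by omega)
  obtain ⟨k, hk, hfail⟩ := hA X hX K' hcard
  exact hfail fun x hx => hK k (hK' hk) x hx

lemma pow_le_aux (h x : ℕ) : x ^ h ≤ 2 ^ h * (x.choose h * h.factorial + h ^ h) := by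
  have h1 : x ≤ 2 * max (x - h) h := by
    rcases le_total (x - h) h with hc | hc
    · rw [max_eq_right hc]; omega
    · rw [max_eq_left hc]; omega
  have h2 : (x - h) ^ h ≤ x.choose h * h.factorial := by
    have h3 : (x - h) ^ h ≤ (x + 1 - h) ^ h := Nat.pow_le_pow_left (by omega) h
    have h4 := Nat.pow_sub_le_descFactorial x h
    rw [Nat.descFactorial_eq_factorial_mul_choose] at h4
    exact le_trans h3 (h4.trans_eq (mul_comm _ _))
  calc x ^ h ≤ (2 * max (x - h) h) ^ h := Nat.pow_le_pow_left h1 h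
    _ = 2 ^ h * (max (x - h) h) ^ h := mul_pow _ _ _
    _ ≤ 2 ^ h * (x.choose h * h.factorial + h ^ h) := by
        apply Nat.mul_le_mul_left
        rcases max_cases (x - h) h with ⟨hm, _⟩ | ⟨hm, _⟩ <;> rw [hm]
        · omega
        · omega


lemma recon {s : Finset ℕ} (hne : s.Nonempty) :
    s = (insert 0 ((s.image (fun x => s.sup id - x)).erase 0)).image
        (fun d => s.sup id - d) := by
  set M := s.sup id with hM
  have hMmem : M ∈ s := by
    obtain ⟨b, hb, hbe⟩ := Finset.exists_mem_eq_sup s hne id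
    rw [hM, hbe]; exact hb
  have hle : ∀ x ∈ s, x ≤ M := fun x hx => Finset.le_sup (f := id) hx
  apply Finset.ext
  intro y
  constructor
  · intro hy
    rcases eq_or_ne y M with rfl | hne'
    · exact Finset.mem_image.2 ⟨0, Finset.mem_insert_self _ _, by omega⟩
    · refine Finset.mem_image.2 ⟨M - y, ?_, ?_⟩
      · refine Finset.mem_insert_of_mem (Finset.mem_erase.2 ⟨?_, Finset.mem_image_of_mem _ hy⟩)
        have := hle y hy; omega
      · have := hle y hy; omega
  · intro hy
    obtain ⟨d, hd, rfl⟩ := Finset.mem_image.1 hy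
    rcases Finset.mem_insert.1 hd with rfl | hd'
    · simpa using hMmem
    · obtain ⟨hd0, hdi⟩ := Finset.mem_erase.1 hd'
      obtain ⟨z, hz, rfl⟩ := Finset.mem_image.1 hdi
      have := hle z hz
      have : M - (M - z) = z := by omega
      rw [this]; exact hz

lemma image_card {s : Finset ℕ} {h : ℕ} (hcard : s.card = h) (hh : 1 ≤ h) :
    ((s.image (fun x => s.sup id - x)).erase 0).card = h - 1 := by
  have hne : s.Nonempty := Finset.card_pos.1 (by omega)
  have hMmem : s.sup id ∈ s := by
    obtain ⟨b, hb, hbe⟩ := Finset.exists_mem_eq_sup s hne id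
    rw [hbe]; exact hb
  have hle : ∀ x ∈ s, x ≤ s.sup id := fun x hx => Finset.le_sup (f := id) hx
  have hinj : Set.InjOn (fun x => s.sup id - x) s := by
    intro a ha b hb hab
    have := hle a ha; have := hle b hb
    simp only at hab; omega
  have h0 : (0 : ℕ) ∈ s.image (fun x => s.sup id - x) :=
    Finset.mem_image.2 ⟨s.sup id, hMmem, by omega⟩
  rw [Finset.card_erase_of_mem h0, Finset.card_image_of_injOn hinj, hcard]

lemma count_lemma (g h N : ℕ) (hh : 2 ≤ h) (hN : 1 ≤ N) (A : Set ℕ)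
    (hA : IsChSet h g ((fun a : ℕ => (a : ℤ)) '' A))
    (F : ℕ → Finset ℕ)
    (hF : ∀ ν x, x ∈ F ν → x ∈ A ∧ (ν - 1) * N < x ∧ x ≤ ν * N) :
    ∑ ν ∈ Finset.Icc 1 N, ((F ν).card.choose h) ≤ (g - 1) * (N - 1).choose (h - 1) := by
  classical
  set S : Finset ((_ : ℕ) × Finset ℕ) :=
    (Finset.Icc 1 N).sigma (fun ν => (F ν).powersetCard h) with hS
  set f : ((_ : ℕ) × Finset ℕ) → Finset ℕ :=
    (fun p => (p.2.image (fun x => p.2.sup id - x)).erase 0) with hf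
  -- facts about elements of S
  have hmem : ∀ p ∈ S, 1 ≤ p.1 ∧ p.1 ≤ N ∧ p.2 ⊆ F p.1 ∧ p.2.card = h := by
    intro p hp
    obtain ⟨h1, h2⟩ := Finset.mem_sigma.1 hp
    obtain ⟨hsub, hcard⟩ := Finset.mem_powersetCard.1 h2
    exact ⟨(Finset.mem_Icc.1 h1).1, (Finset.mem_Icc.1 h1).2, hsub, hcard⟩
  have hne : ∀ p ∈ S, p.2.Nonempty := fun p hp =>
    Finset.card_pos.1 (by rw [(hmem p hp).2.2.2]; omega)
  have hsupmem : ∀ p ∈ S, p.2.sup id ∈ p.2 := by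
    intro p hp
    obtain ⟨b, hb, hbe⟩ := Finset.exists_mem_eq_sup p.2 (hne p hp) id
    rw [hbe]; exact hb
  -- images land in powersetCard (h-1) of Ioo 0 N
  have himg : ∀ p ∈ S, f p ∈ (Finset.Ioo 0 N).powersetCard (h - 1) := by
    intro p hp
    obtain ⟨hν1, hνN, hsub, hcard⟩ := hmem p hp
    refine Finset.mem_powersetCard.2 ⟨?_, image_card hcard (by omega)⟩
    intro d hd
    obtain ⟨hd0, hdi⟩ := Finset.mem_erase.1 hd
    obtain ⟨x, hx, rfl⟩ := Finset.mem_image.1 hdi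
    have hxb := hF p.1 x (hsub hx)
    have hMb := hF p.1 (p.2.sup id) (hsub (hsupmem p hp))
    have key : (p.1 - 1) * N + N = p.1 * N := by
      obtain ⟨m, hme⟩ : ∃ m, p.1 = m + 1 := ⟨p.1 - 1, by omega⟩
      rw [hme]; simp [Nat.succ_mul]
    refine Finset.mem_Ioo.2 ⟨by omega, by omega⟩
  -- fiber bound
  have hfiber : ∀ D ∈ S.image f, (S.filter (fun p => f p = D)).card ≤ g - 1 := by
    intro D hD
    obtain ⟨p₀, hp₀, hDp₀⟩ := Finset.mem_image.1 hD
    have hDIoo : D ∈ (Finset.Ioo 0 N).powersetCard (h - 1) := hDp₀ ▸ himg p₀ hp₀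
    obtain ⟨hDsub, hDcard⟩ := Finset.mem_powersetCard.1 hDIoo
    set T := S.filter (fun p => f p = D) with hT
    set X : Finset ℤ := insert 0 (D.image (fun d : ℕ => -(d : ℤ))) with hX
    have hXcard : X.card = h := by
      rw [hX, Finset.card_insert_of_notMem, Finset.card_image_of_injective _
        (fun a b hab => by omega), hDcard]
      · omega
      · intro hc
        obtain ⟨d, hd, hd0⟩ := Finset.mem_image.1 hc
        have := (Finset.mem_Ioo.1 (hDsub hd)).1
        omega
    -- the map to the max element, as an integer
    set m : ((_ : ℕ) × Finset ℕ) → ℤ := (fun p => ((p.2.sup id : ℕ) : ℤ)) with hm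
    have hinj : Set.InjOn m T := by
      intro p hp q hq hpq
      have hpS : p ∈ S := (Finset.mem_filter.1 hp).1
      have hqS : q ∈ S := (Finset.mem_filter.1 hq).1
      have hpf : f p = D := (Finset.mem_filter.1 hp).2
      have hqf : f q = D := (Finset.mem_filter.1 hq).2
      have hsup : p.2.sup id = q.2.sup id := by
        simp only [hm] at hpq; exact_mod_cast hpq
      have hs2 : p.2 = q.2 := by
        rw [recon (hne p hpS), recon (hne q hqS)]
        rw [show ((p.2.image (fun x => p.2.sup id - x)).erase 0) = D from hpf,
            show ((q.2.image (fun x => q.2.sup id - x)).erase 0) = D from hqf, hsup]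
      have hs1 : p.1 = q.1 := by
        have hMp := hF p.1 (p.2.sup id) ((hmem p hpS).2.2.1 (hsupmem p hpS))
        have hMq := hF q.1 (q.2.sup id) ((hmem q hqS).2.2.1 (hsupmem q hqS))
        rw [hsup] at hMp
        by_contra hne'
        rcases Nat.lt_or_ge p.1 q.1 with hlt | hge
        · have : p.1 * N ≤ (q.1 - 1) * N := Nat.mul_le_mul_right N (by omega)
          omega
        · have hlt : q.1 < p.1 := by omega
          have : q.1 * N ≤ (p.1 - 1) * N := Nat.mul_le_mul_right N (by omega)
          omega
      exact Sigma.ext hs1 (heq_of_eq hs2)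
    have hKcard : (T.image m).card = T.card := Finset.card_image_of_injOn hinj
    have hKall : ∀ k ∈ T.image m, ∀ x ∈ X, x + k ∈ ((fun a : ℕ => (a : ℤ)) '' A) := by
      intro k hk x hx
      obtain ⟨p, hp, rfl⟩ := Finset.mem_image.1 hk
      have hpS : p ∈ S := (Finset.mem_filter.1 hp).1
      have hpf : f p = D := (Finset.mem_filter.1 hp).2
      have hsub : p.2 ⊆ F p.1 := (hmem p hpS).2.2.1
      rcases Finset.mem_insert.1 hx with rfl | hx'
      · have hMA : p.2.sup id ∈ A := (hF p.1 _ (hsub (hsupmem p hpS))).1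
        exact ⟨p.2.sup id, hMA, by simp [hm]⟩
      · obtain ⟨d, hd, rfl⟩ := Finset.mem_image.1 hx'
        rw [← hpf] at hd
        obtain ⟨hd0, hdi⟩ := Finset.mem_erase.1 hd
        obtain ⟨y, hy, hyd⟩ := Finset.mem_image.1 hdi
        have hyM : y ≤ p.2.sup id := Finset.le_sup (f := id) hy
        have hyA : y ∈ A := (hF p.1 y (hsub hy)).1
        refine ⟨y, hyA, ?_⟩
        simp only [hm]
        rw [← hyd]
        push_cast [Nat.cast_sub hyM]
        ring
    have := chset_bound hA hXcard hKall
    omega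
  -- assemble
  have hcard : S.card = ∑ ν ∈ Finset.Icc 1 N, ((F ν).card.choose h) := by
    rw [hS, Finset.card_sigma]
    exact Finset.sum_congr rfl fun ν _ => Finset.card_powersetCard _ _
  have h1 : S.card ≤ (g - 1) * (S.image f).card :=
    Finset.card_le_mul_card_image S (g - 1) hfiber
  have h2 : (S.image f).card ≤ (N - 1).choose (h - 1) := by
    have : S.image f ⊆ (Finset.Ioo 0 N).powersetCard (h - 1) := by
      intro D hD
      obtain ⟨p, hp, rfl⟩ := Finset.mem_image.1 hD
      exact himg p hp
    calc (S.image f).card ≤ ((Finset.Ioo 0 N).powersetCard (h - 1)).card :=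
          Finset.card_le_card this
      _ = (N - 1).choose (h - 1) := by
          rw [Finset.card_powersetCard, Nat.card_Ioo]
          norm_num
  calc ∑ ν ∈ Finset.Icc 1 N, ((F ν).card.choose h) = S.card := hcard.symm
    _ ≤ (g - 1) * (S.image f).card := h1
    _ ≤ (g - 1) * (N - 1).choose (h - 1) := Nat.mul_le_mul_left _ h2

theorem stmt13 (g h : ℕ) (hh : 2 ≤ h) (hgh : h ≤ g) :
    ∃ C : ℝ, 0 < C ∧ ∀ A : Set ℕ, IsChSet h g ((fun a : ℕ => (a : ℤ)) '' A) →
      ∀ N : ℕ, 1 ≤ N →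
        ∑ ν ∈ Finset.Icc 1 N, ((A ∩ Set.Ioc ((ν - 1) * N) (ν * N)).ncard : ℝ) ^ h
          ≤ C * (N : ℝ) ^ (h - 1) := by
  classical
  set Cn : ℕ := 2 ^ h * (h.factorial * g + h ^ h) with hCn
  refine ⟨(Cn : ℝ), ?_, ?_⟩
  · have : 0 < Cn := by
      apply Nat.mul_pos (Nat.two_pow_pos h)
      have := Nat.factorial_pos h
      have : 0 < h.factorial * g := Nat.mul_pos (Nat.factorial_pos h) (by omega)
      omega
    exact_mod_cast this
  intro A hA N hN
  have hfin : ∀ ν : ℕ, (A ∩ Set.Ioc ((ν - 1) * N) (ν * N)).Finite :=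
    fun ν => (Set.finite_Ioc _ _).subset Set.inter_subset_right
  set F : ℕ → Finset ℕ := fun ν => (hfin ν).toFinset with hFdef
  have hFspec : ∀ ν x, x ∈ F ν → x ∈ A ∧ (ν - 1) * N < x ∧ x ≤ ν * N := by
    intro ν x hx
    rw [hFdef, Set.Finite.mem_toFinset] at hx
    exact ⟨hx.1, hx.2.1, hx.2.2⟩
  have hncard : ∀ ν, (A ∩ Set.Ioc ((ν - 1) * N) (ν * N)).ncard = (F ν).card :=
    fun ν => Set.ncard_eq_toFinset_card _ (hfin ν)
  have key := count_lemma g h N hh hN A hA F hFspec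
  -- the nat-level inequality
  have nat_ineq : ∑ ν ∈ Finset.Icc 1 N, (F ν).card ^ h ≤ Cn * N ^ (h - 1) := by
    calc ∑ ν ∈ Finset.Icc 1 N, (F ν).card ^ h
        ≤ ∑ ν ∈ Finset.Icc 1 N, 2 ^ h * ((F ν).card.choose h * h.factorial + h ^ h) :=
          Finset.sum_le_sum fun ν _ => pow_le_aux h _
      _ = 2 ^ h * ((∑ ν ∈ Finset.Icc 1 N, (F ν).card.choose h) * h.factorial + h ^ h * N) := by
          rw [← Finset.mul_sum, Finset.sum_add_distrib, ← Finset.sum_mul, Finset.sum_const,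
            Nat.card_Icc]
          simp only [smul_eq_mul, Nat.add_sub_cancel]; ring
      _ ≤ 2 ^ h * ((h.factorial * g + h ^ h) * N ^ (h - 1)) := by
          apply Nat.mul_le_mul_left
          have b1 : (∑ ν ∈ Finset.Icc 1 N, (F ν).card.choose h) * h.factorial
              ≤ h.factorial * g * N ^ (h - 1) := by
            have c1 : (N - 1).choose (h - 1) ≤ N ^ (h - 1) :=
              (Nat.choose_le_pow _ _).trans (Nat.pow_le_pow_left (by omega) _)
            calc (∑ ν ∈ Finset.Icc 1 N, (F ν).card.choose h) * h.factorial
                ≤ ((g - 1) * (N - 1).choose (h - 1)) * h.factorial :=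
                  Nat.mul_le_mul_right _ key
              _ ≤ (g * N ^ (h - 1)) * h.factorial :=
                  Nat.mul_le_mul_right _ (Nat.mul_le_mul (by omega) c1)
              _ = h.factorial * g * N ^ (h - 1) := by ring
          have b2 : h ^ h * N ≤ h ^ h * N ^ (h - 1) := by
            apply Nat.mul_le_mul_left
            calc N = N ^ 1 := (pow_one N).symm
              _ ≤ N ^ (h - 1) := Nat.pow_le_pow_right hN (by omega)
          calc (∑ ν ∈ Finset.Icc 1 N, (F ν).card.choose h) * h.factorial + h ^ h * N
              ≤ h.factorial * g * N ^ (h - 1) + h ^ h * N ^ (h - 1) := Nat.add_le_add b1 b2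
            _ = (h.factorial * g + h ^ h) * N ^ (h - 1) := by ring
      _ = Cn * N ^ (h - 1) := by rw [hCn]; ring
  -- cast to ℝ
  have lhs_eq : ∑ ν ∈ Finset.Icc 1 N, ((A ∩ Set.Ioc ((ν - 1) * N) (ν * N)).ncard : ℝ) ^ h
      = ((∑ ν ∈ Finset.Icc 1 N, (F ν).card ^ h : ℕ) : ℝ) := by
    push_cast
    exact Finset.sum_congr rfl fun ν _ => by rw [hncard]
  rw [lhs_eq]
  have : ((Cn * N ^ (h - 1) : ℕ) : ℝ) = (Cn : ℝ) * (N : ℝ) ^ (h - 1) := by push_cast; ring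
  rw [← this]
  exact_mod_cast nat_ineq
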